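/- In Ãₙ, the generator a_{n+1} satisfies a_{n+1} = a_n a_{n−1} ⋯ a₃ a₂ p_{n+1} (p_{n+1}⁻¹ p₁), where p_{n+1} = a₁a₂⋯aₙ; in particular, a_{n+1} lies in the subgroup generated by a₁,…,aₙ and N = ⟨pⱼ⁻¹pᵢ⟩, so Ãₙ = ⟨a₁,…,aₙ⟩ · N. -/

import Mathlib

open CoxeterMatrix

/-- The affine Coxeter matrix of type Ãₙ on the cyclic index set `ZMod (n+1)`:
`aᵢ² = 1`, `(aᵢa_{i+1})³ = 1`, and non-adjacent generators (mod n+1) commute. -/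
def affineA (n : ℕ) : CoxeterMatrix (ZMod (n + 1)) where
  M := fun i j => if i = j then 1 else if i = j + 1 ∨ j = i + 1 then 3 else 2
  isSymm := by
    ext i j
    by_cases h : i = j
    · change (if j = i then 1 else if j = i + 1 ∨ i = j + 1 then 3 else 2 : ℕ) = (if i = j then 1 else if i = j + 1 ∨ j = i + 1 then 3 else 2 : ℕ); simp [h]
    · change (if j = i then 1 else if j = i + 1 ∨ i = j + 1 then 3 else 2 : ℕ) = (if i = j then 1 else if i = j + 1 ∨ j = i + 1 then 3 else 2 : ℕ)
      rw [if_neg h, if_neg (Ne.symm h)]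
      exact if_congr or_comm rfl rfl
  diagonal := fun i => by simp
  off_diagonal := fun i j h => by
    simp only [if_neg h]
    split <;> simp

/-- The Coxeter generators `aᵢ` of `Ãₙ`. -/
def aa (n : ℕ) (i : ZMod (n + 1)) : (affineA n).Group := (affineA n).simple i

/-- The cyclic products `pⱼ = a_{j+1} a_{j+2} ⋯ a_{j-1}` (indices mod `n+1`). -/
def pp (n : ℕ) (j : ZMod (n + 1)) : (affineA n).Group :=
  ((List.range n).map fun k => aa n (j + 1 + (k : ℕ))).prod

/-- `gⱼ = pⱼ⁻¹ p_{j+1}`. -/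
def gg (n : ℕ) (j : ZMod (n + 1)) : (affineA n).Group := (pp n j)⁻¹ * pp n (j + 1)

/-- The subgroup `N = ⟨pⱼ⁻¹pᵢ : i, j⟩` of `Ãₙ`. -/
def NN (n : ℕ) : Subgroup (affineA n).Group :=
  Subgroup.closure {x | ∃ i j : ZMod (n + 1), x = (pp n j)⁻¹ * pp n i}

/-- The standard parabolic subgroup `⟨a₁,…,aₙ⟩` of `Ãₙ` (all generators except `a_{n+1} = a₀`). -/
def parab (n : ℕ) : Subgroup (affineA n).Group :=
  Subgroup.closure {x | ∃ i : ZMod (n + 1), i ≠ 0 ∧ x = aa n i}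

/-- In `Ãₙ`, `a_{n+1} = aₙ a_{n−1} ⋯ a₂ · p_{n+1} · (p_{n+1}⁻¹ p₁)` (here `a_{n+1} = a₀` and
`p_{n+1} = p₀` mod `n+1`); consequently `Ãₙ = ⟨a₁,…,aₙ⟩ · N`. -/
theorem stmt13 (n : ℕ) (hn : 2 ≤ n) :
    aa n ((n + 1 : ℕ)) =
      ((List.range (n - 1)).map fun t => aa n ((n - t : ℕ))).prod *
        pp n ((n + 1 : ℕ)) * ((pp n ((n + 1 : ℕ)))⁻¹ * pp n 1) ∧
    parab n ⊔ NN n = ⊤ := by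
  have hsq : ∀ i : ZMod (n + 1), aa n i * aa n i = 1 := fun i =>
    (affineA n).toCoxeterSystem.simple_mul_simple_self i
  -- the reversal lemma
  have hrevgen : ∀ L : List ((affineA n).Group),
      (∀ x ∈ L, x * x = 1) → L.reverse.prod * L.prod = 1 := by
    intro L
    induction L with
    | nil => simp
    | cons x l ih =>
      intro h
      have hx : x * x = 1 := h x List.mem_cons_self
      have hl : l.reverse.prod * l.prod = 1 :=
        ih fun y hy => h y (List.mem_cons_of_mem _ hy)
      simp only [List.reverse_cons, List.prod_append, List.prod_cons, List.prod_nil, mul_one]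
      calc l.reverse.prod * x * (x * l.prod)
          = l.reverse.prod * (x * x) * l.prod := by group
        _ = 1 := by rw [hx, mul_one, hl]
  -- the key list identity
  have hL : ((List.range (n - 1)).map fun t => aa n ((n - t : ℕ))) =
      ((List.range (n - 1)).map fun k => aa n ((k + 2 : ℕ))).reverse := by
    rw [← List.map_reverse, List.range_eq_range', List.reverse_range', List.map_map, ← List.range_eq_range']
    apply List.map_congr_left
    intro t ht
    rw [List.mem_range] at ht
    simp only [Function.comp]
    congr 1
    have : 0 + (n - 1) - 1 - t + 2 = n - t := by omega
    rw [this]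
  -- pp n 1 decomposition
  have hn1 : ((List.range n).map fun k => aa n (1 + 1 + (k : ℕ))) =
      ((List.range (n - 1)).map fun k => aa n ((k + 2 : ℕ))) ++ [aa n ((n + 1 : ℕ))] := by
    have hn' : n = (n - 1) + 1 := by omega
    rw [hn', List.range_succ, List.map_append]
    congr 1
    · apply List.map_congr_left
      intro k _
      congr 1
      push_cast
      ring
    · simp only [List.map_cons, List.map_nil]
      congr 2
      have : (n - 1) + 2 = n + 1 := by omega
      push_cast [← this]
      ring
  have hpp1 : pp n 1 =
      ((List.range (n - 1)).map fun k => aa n ((k + 2 : ℕ))).prod * aa n ((n + 1 : ℕ)) := by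
    rw [pp, hn1, List.prod_append, List.prod_cons, List.prod_nil, mul_one]
  have h1 : aa n ((n + 1 : ℕ)) =
      ((List.range (n - 1)).map fun t => aa n ((n - t : ℕ))).prod *
        pp n ((n + 1 : ℕ)) * ((pp n ((n + 1 : ℕ)))⁻¹ * pp n 1) := by
    rw [mul_assoc, mul_inv_cancel_left, hpp1, hL, ← mul_assoc,
      hrevgen _ (by rintro x hx; rw [List.mem_map] at hx; obtain ⟨k, _, rfl⟩ := hx; exact hsq _),
      one_mul]
  refine ⟨h1, ?_⟩
  -- second part
  have hcast0 : ((n + 1 : ℕ) : ZMod (n + 1)) = 0 := ZMod.natCast_self (n + 1)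
  have hne : ∀ m : ℕ, 1 ≤ m → m ≤ n → ((m : ℕ) : ZMod (n + 1)) ≠ 0 := by
    intro m h1m h2m h0
    rw [ZMod.natCast_eq_zero_iff] at h0
    have := Nat.le_of_dvd (by omega) h0
    omega
  rw [eq_top_iff, ← (affineA n).toCoxeterSystem.subgroup_closure_range_simple]
  rw [Subgroup.closure_le]
  rintro x ⟨i, rfl⟩
  show aa n i ∈ parab n ⊔ NN n
  by_cases hi : i = 0
  · subst hi
    rw [← hcast0, h1]
    have hP : ((List.range (n - 1)).map fun t => aa n ((n - t : ℕ))).prod ∈ parab n := by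
      apply Subgroup.list_prod_mem
      intro x hx
      rw [List.mem_map] at hx
      obtain ⟨t, ht, rfl⟩ := hx
      rw [List.mem_range] at ht
      exact Subgroup.subset_closure ⟨_, hne (n - t) (by omega) (by omega), rfl⟩
    have hp : pp n ((n + 1 : ℕ)) ∈ parab n := by
      rw [hcast0, pp]
      apply Subgroup.list_prod_mem
      intro x hx
      rw [List.mem_map] at hx
      obtain ⟨k, hk, rfl⟩ := hx
      rw [List.mem_range] at hk
      have : (0 : ZMod (n + 1)) + 1 + (k : ℕ) = ((k + 1 : ℕ) : ZMod (n + 1)) := by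
        push_cast; ring
      rw [this]
      exact Subgroup.subset_closure ⟨_, hne (k + 1) (by omega) (by omega), rfl⟩
    have hN : (pp n ((n + 1 : ℕ)))⁻¹ * pp n 1 ∈ NN n :=
      Subgroup.subset_closure ⟨1, ((n + 1 : ℕ) : ZMod (n + 1)), rfl⟩
    exact Subgroup.mul_mem _
      (Subgroup.mul_mem _ (Subgroup.mem_sup_left hP) (Subgroup.mem_sup_left hp))
      (Subgroup.mem_sup_right hN)
  · exact Subgroup.mem_sup_left (Subgroup.subset_closure ⟨i, hi, rfl⟩)
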